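/- Let F : ℂ^{n-1} → ℝ be given by F(z') = f₁(|z¹|) + ⋯ + f_k(|z^k|) where z' = (z¹,…,z^k) ∈ ℂ^{n₁}×⋯×ℂ^{n_k} and each f_j : [0,∞) → [0,∞) is strictly increasing with f_j(0)=0. Fix α_j > 1, β > 1, and let z = (z¹,…,z^k,z_n) satisfy Re z_n > kβ[f₁(α₁|z¹|) + ⋯ + f_k(α_k|z^k|)]. Then for every w = (w¹,…,w^k,w_n) with |w^j - z^j| < ((α_j-1)/α_j)·f_j⁻¹(Re z_n/(kβ)) for each j and |w_n - z_n| < ((β-1)/β)·Re z_n, one has Re w_n > F(w'). -/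

import Mathlib

/-- the nonisotropic polydisc `A_z` around a point `z` of the approach
region `Γ_k^{α,β}` is contained in the domain `{Re w_n > F(w')}`. -/
theorem stmt_14 (k : ℕ) (hk : 1 ≤ k) (n : Fin k → ℕ)
    (f finv : Fin k → ℝ → ℝ)
    (hf : ∀ j, StrictMonoOn (f j) (Set.Ici 0)) (hf0 : ∀ j, f j 0 = 0)
    (hinv : ∀ j, ∀ t ≥ (0:ℝ), 0 ≤ finv j t ∧ f j (finv j t) = t)
    (α : Fin k → ℝ) (hα : ∀ j, 1 < α j) (β : ℝ) (hβ : 1 < β)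
    (z : (j : Fin k) → EuclideanSpace ℂ (Fin (n j))) (zn : ℂ)
    (hz : (k : ℝ) * β * (∑ j, f j (α j * ‖z j‖)) < zn.re)
    (w : (j : Fin k) → EuclideanSpace ℂ (Fin (n j))) (wn : ℂ)
    (hw : ∀ j, ‖w j - z j‖ < ((α j - 1) / α j) * finv j (zn.re / (k * β)))
    (hwn : ‖wn - zn‖ < ((β - 1) / β) * zn.re) :
    (∑ j, f j ‖w j‖) < wn.re := by
  have hkpos : (0:ℝ) < k := by exact_mod_cast hk
  have hβ0 : (0:ℝ) < β := lt_trans one_pos hβ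
  have hkβ : (0:ℝ) < (k:ℝ) * β := mul_pos hkpos hβ0
  have hterm0 : ∀ j : Fin k, 0 ≤ f j (α j * ‖z j‖) := by
    intro j
    have hx : (0:ℝ) ≤ α j * ‖z j‖ :=
      mul_nonneg (le_of_lt (lt_trans one_pos (hα j))) (norm_nonneg _)
    have := (hf j).monotoneOn (Set.mem_Ici.2 le_rfl) (Set.mem_Ici.2 hx) hx
    linarith [hf0 j]
  have hsum0 : 0 ≤ ∑ j, f j (α j * ‖z j‖) := Finset.sum_nonneg fun j _ => hterm0 j
  have hzn : 0 < zn.re := lt_of_le_of_lt (by positivity) hz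
  set T : ℝ := zn.re / ((k:ℝ) * β) with hT
  have hTpos : 0 < T := div_pos hzn hkβ
  have hsumT : (∑ j, f j (α j * ‖z j‖)) < T := by
    rw [hT, lt_div_iff₀ hkβ]; linarith [hz]
  -- each w j has f j ‖w j‖ < T
  have key : ∀ j : Fin k, f j ‖w j‖ < T := by
    intro j
    obtain ⟨hinv0, hinvf⟩ := hinv j T hTpos.le
    have hαj : (0:ℝ) < α j := lt_trans one_pos (hα j)
    have htermT : f j (α j * ‖z j‖) < T := by
      have hle : f j (α j * ‖z j‖) ≤ ∑ i, f i (α i * ‖z i‖) :=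
        Finset.single_le_sum (fun i _ => hterm0 i) (Finset.mem_univ j)
      linarith
    have hzlt : α j * ‖z j‖ < finv j T := by
      by_contra h
      push_neg at h
      have hx : (0:ℝ) ≤ α j * ‖z j‖ := mul_nonneg hαj.le (norm_nonneg _)
      have := (hf j).monotoneOn (Set.mem_Ici.2 hinv0) (Set.mem_Ici.2 hx) h
      rw [hinvf] at this
      linarith
    have hznorm : ‖z j‖ < finv j T / α j := by
      rw [lt_div_iff₀ hαj]; linarith [hzlt]
    have hwnorm : ‖w j‖ < finv j T := by
      have h1 : ‖w j‖ ≤ ‖z j‖ + ‖w j - z j‖ := by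
        have := norm_add_le (z j) (w j - z j)
        simpa using this
      have h2 := hw j
      have : ‖z j‖ + ((α j - 1) / α j) * finv j T > ‖w j‖ := by
        rw [hT] at h2 ⊢; linarith
      have heq : finv j T / α j + ((α j - 1) / α j) * finv j T = finv j T := by
        field_simp; ring
      linarith
    have := (hf j) (Set.mem_Ici.2 (norm_nonneg (w j))) (Set.mem_Ici.2 hinv0) hwnorm
    rw [hinvf] at this
    exact this
  have hne : (Finset.univ : Finset (Fin k)).Nonempty := ⟨⟨0, hk⟩, Finset.mem_univ _⟩
  have hsumW : (∑ j, f j ‖w j‖) < ∑ _j : Fin k, T :=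
    Finset.sum_lt_sum_of_nonempty hne fun j _ => key j
  have hkT : (∑ _j : Fin k, T) = zn.re / β := by
    rw [Finset.sum_const, Finset.card_univ, Fintype.card_fin, nsmul_eq_mul, hT]
    field_simp
  have hre : zn.re / β < wn.re := by
    have habs := Complex.abs_re_le_norm (wn - zn)
    have : |(wn - zn).re| < ((β - 1) / β) * zn.re := lt_of_le_of_lt habs hwn
    have h2 : -(((β - 1) / β) * zn.re) < (wn - zn).re := by
      rcases abs_lt.1 this with ⟨h, _⟩; linarith
    have h3 : (wn - zn).re = wn.re - zn.re := by simp
    have h4 : ((β - 1) / β) * zn.re = zn.re - zn.re / β := by field_simp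
    linarith
  linarith [hsumW, hkT ▸ hsumW]
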